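/- Let G be a group and H a finite-index subgroup of G. Then G is product separable (every product of finitely many finitely generated subgroups is closed in the profinite topology) if and only if H is product separable. -/
import Mathlib

/-- The profinite topology on a group `G`: generated by cosets of finite-index subgroups. -/
def profiniteTopology (G : Type*) [Group G] : TopologicalSpace G :=
  TopologicalSpace.generateFrom
    {S : Set G | ∃ (H : Subgroup G) (g : G), H.FiniteIndex ∧ S = (g * ·) '' (H : Set G)}

/-- A group is product separable if every product of finitely many finitely generated
subgroups is closed in the profinite topology. -/
def ProductSeparable (G : Type*) [Group G] : Prop :=
  ∀ (n : ℕ) (H : Fin n → Subgroup G), (∀ i, (H i).FG) →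
    @IsClosed G (profiniteTopology G)
      {x : G | ∃ f : Fin n → G, (∀ i, f i ∈ H i) ∧ x = (List.ofFn f).prod}

namespace PSaux

open Subgroup TopologicalSpace Topology

variable {G : Type*} [Group G]

def pset (n : ℕ) (K : Fin n → Subgroup G) : Set G :=
  {x : G | ∃ f : Fin n → G, (∀ i, f i ∈ K i) ∧ x = (List.ofFn f).prod}

lemma fgmap {L : Subgroup G} {G' : Type*} [Group G'] (h : L.FG) (f : G →* G') :
    (L.map f).FG := by
  rw [Subgroup.fg_iff] at h ⊢
  obtain ⟨S, hS, hfin⟩ := h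
  exact ⟨f '' S, by rw [← MonoidHom.map_closure, hS], hfin.image f⟩

lemma mem_coset {K : Subgroup G} {g x : G} : x ∈ (g * ·) '' (K : Set G) ↔ g⁻¹ * x ∈ K := by
  constructor
  · rintro ⟨k, hk, rfl⟩; simpa
  · intro h; exact ⟨g⁻¹ * x, h, by group⟩

lemma isOpen_coset {K : Subgroup G} (hK : K.FiniteIndex) (g : G) :
    IsOpen[profiniteTopology G] ((g * ·) '' (K : Set G)) :=
  .basic _ ⟨K, g, hK, rfl⟩

lemma isClosed_coset {K : Subgroup G} (hK : K.FiniteIndex) (g : G) :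
    IsClosed[profiniteTopology G] ((g * ·) '' (K : Set G)) := by
  letI := profiniteTopology G
  rw [← isOpen_compl_iff]
  have h : ((g * ·) '' (K : Set G))ᶜ = ⋃ x : {x : G // g⁻¹ * x ∉ K}, (x.1 * ·) '' (K : Set G) := by
    ext y
    simp only [Set.mem_compl_iff, mem_coset, Set.mem_iUnion]
    constructor
    · intro hy; exact ⟨⟨y, hy⟩, by simpa using one_mem K⟩
    · rintro ⟨⟨x, hx⟩, hyx⟩ hy
      exact hx (by simpa [mul_assoc] using mul_mem hy (inv_mem hyx))
  rw [h]
  exact isOpen_iUnion fun x => isOpen_coset hK x.1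

lemma isClosed_coe_subgroup {H : Subgroup G} (hH : H.FiniteIndex) :
    IsClosed[profiniteTopology G] (H : Set G) := by
  have h := isClosed_coset hH 1
  simpa using h

lemma continuous_mul_right (t : G) :
    Continuous[profiniteTopology G, profiniteTopology G] (· * t) := by
  show Continuous[profiniteTopology G, generateFrom _] (· * t)
  rw [continuous_generateFrom_iff]
  rintro s ⟨K, g, hK, rfl⟩
  letI := profiniteTopology G
  have hmem : ∀ y : G, y ∈ K.map (MulAut.conj t).toMonoidHom ↔ t⁻¹ * y * t ∈ K := by
    intro y
    constructor
    · rintro ⟨k, hk, rfl⟩; simpa [MulAut.conj_apply, mul_assoc] using hk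
    · intro hy; exact ⟨t⁻¹ * y * t, hy, by simp [MulAut.conj_apply]; group⟩
  have hfi : (K.map (MulAut.conj t).toMonoidHom).FiniteIndex := by
    constructor
    rw [Subgroup.index_map]
    have h1 : (MulAut.conj t).toMonoidHom.ker = ⊥ :=
      (MulAut.conj t).toMonoidHom.ker_eq_bot_iff.2 (MulAut.conj t).injective
    have h2 : (MulAut.conj t).toMonoidHom.range = ⊤ :=
      MonoidHom.range_eq_top.2 (MulAut.conj t).surjective
    rw [h1, h2, sup_bot_eq, Subgroup.index_top, mul_one]
    exact hK.index_ne_zero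
  have h : (· * t) ⁻¹' ((g * ·) '' (K : Set G)) =
      ((g * t⁻¹) * ·) '' ((K.map (MulAut.conj t).toMonoidHom : Subgroup G) : Set G) := by
    have key : ∀ x : G, t⁻¹ * ((g * t⁻¹)⁻¹ * x) * t = g⁻¹ * (x * t) := by intro x; group
    ext x
    rw [Set.mem_preimage, mem_coset, mem_coset, hmem, key]
  rw [h]
  exact isOpen_coset hfi _

lemma isClosed_translate {S : Set G} (hS : IsClosed[profiniteTopology G] S) (t : G) :
    IsClosed[profiniteTopology G] ((· * t) '' S) := by
  letI := profiniteTopology G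
  have h : (· * t) '' S = (· * t⁻¹) ⁻¹' S := by
    ext x
    constructor
    · rintro ⟨s, hs, rfl⟩; simpa
    · intro hx; exact ⟨x * t⁻¹, hx, by group⟩
  rw [h]
  exact hS.preimage (continuous_mul_right t⁻¹)


lemma mem_map_subtype_iff {H : Subgroup G} {L : Subgroup ↥H} {y : ↥H} :
    (y : G) ∈ L.map H.subtype ↔ y ∈ L := by
  constructor
  · rintro ⟨l, hl, hly⟩
    rwa [show l = y from Subtype.ext hly] at hl
  · intro hy; exact ⟨y, hy, rfl⟩

lemma profiniteTopology_subgroup (H : Subgroup G) (hH : H.FiniteIndex) :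
    profiniteTopology ↥H = (profiniteTopology G).induced H.subtype := by
  apply le_antisymm
  · -- induced-opens are open in profiniteTopology ↥H
    show (profiniteTopology ↥H) ≤ (generateFrom _).induced H.subtype
    rw [induced_generateFrom_eq]
    apply le_generateFrom
    rintro s ⟨u, ⟨K, g, hK, rfl⟩, rfl⟩
    letI := profiniteTopology ↥H
    by_cases hne : (H.subtype ⁻¹' ((g * ·) '' (K : Set G))).Nonempty
    · obtain ⟨x0, hx0⟩ := hne
      rw [Set.mem_preimage, mem_coset] at hx0
      have h : H.subtype ⁻¹' ((g * ·) '' (K : Set G)) =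
          (x0 * ·) '' ((K.subgroupOf H : Subgroup ↥H) : Set ↥H) := by
        ext y
        rw [Set.mem_preimage, mem_coset, mem_coset]
        have : (x0⁻¹ * y ∈ K.subgroupOf H) ↔ (x0 : G)⁻¹ * (y : G) ∈ K := by
          rw [mem_subgroupOf]; norm_cast
        rw [this]
        constructor
        · intro hy
          have := mul_mem (inv_mem hx0) hy
          simpa [mul_assoc] using this
        · intro hy
          have := mul_mem hx0 hy
          simpa [mul_assoc] using this
      rw [h]
      haveI : K.FiniteIndex := hK
      exact isOpen_coset (Subgroup.instFiniteIndex_subgroupOf K H) x0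
    · rw [Set.not_nonempty_iff_eq_empty] at hne
      rw [hne]; exact isOpen_empty
  · -- profiniteTopology-↥H-opens are induced-open
    apply le_generateFrom
    rintro s ⟨L, h, hL, rfl⟩
    letI := profiniteTopology G
    refine isOpen_induced_iff.2 ⟨((h : G) * ·) '' ((L.map H.subtype : Subgroup G) : Set G), ?_, ?_⟩
    · refine isOpen_coset ⟨?_⟩ _
      rw [Subgroup.index_map, Subgroup.ker_subtype, Subgroup.range_subtype, sup_bot_eq]
      exact Nat.mul_ne_zero hL.index_ne_zero hH.index_ne_zero
    · ext y
      rw [Set.mem_preimage, mem_coset, mem_coset]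
      show (h : G)⁻¹ * (y : G) ∈ L.map H.subtype ↔ h⁻¹ * y ∈ L
      norm_cast
      exact mem_map_subtype_iff

lemma isClosed_image_of_isClosed {H : Subgroup G} (hH : H.FiniteIndex) {S : Set ↥H}
    (hS : IsClosed[profiniteTopology ↥H] S) :
    IsClosed[profiniteTopology G] (H.subtype '' S) := by
  letI := profiniteTopology G
  rw [profiniteTopology_subgroup H hH] at hS
  obtain ⟨C, hC, rfl⟩ := isClosed_induced_iff.1 hS
  have h : H.subtype '' (H.subtype ⁻¹' C) = C ∩ (H : Set G) := by
    rw [Set.image_preimage_eq_inter_range]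
    congr 1
    rw [Subgroup.coe_subtype, Subtype.range_coe]
  rw [h]
  exact hC.inter (isClosed_coe_subgroup hH)


lemma prod_mul_aux : ∀ (n : ℕ) (m t : Fin n → G) (g : G),
    g * (List.ofFn fun i => m i * t i).prod =
      (List.ofFn fun i : Fin n =>
        (g * ((List.ofFn t).take i).prod) * m i * (g * ((List.ofFn t).take i).prod)⁻¹).prod *
        (g * (List.ofFn t).prod)
  | 0, m, t, g => by simp
  | n+1, m, t, g => by
    have ih := prod_mul_aux n (fun i => m i.succ) (fun i => t i.succ) (g * t 0)
    rw [List.ofFn_succ (f := fun i : Fin (n+1) =>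
        (g * ((List.ofFn t).take i).prod) * m i * (g * ((List.ofFn t).take i).prod)⁻¹),
      List.ofFn_succ (f := fun i => m i * t i), List.ofFn_succ (f := t)]
    simp only [List.prod_cons, Fin.val_succ, Fin.val_zero, List.take_zero, List.prod_nil,
      mul_one, List.take_succ_cons]
    have e1 : g * (m 0 * t 0 * (List.ofFn fun i => m i.succ * t i.succ).prod)
        = (g * m 0 * g⁻¹) * ((g * t 0) * (List.ofFn fun i => m i.succ * t i.succ).prod) := by
      group
    rw [e1, ih]
    have e2 : (fun i : Fin n =>
          (g * t 0 * ((List.ofFn fun i => t i.succ).take i).prod) * m i.succ *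
            (g * t 0 * ((List.ofFn fun i => t i.succ).take i).prod)⁻¹)
        = fun i : Fin n =>
          (g * (t 0 * ((List.ofFn fun i => t i.succ).take i).prod)) * m i.succ *
            (g * (t 0 * ((List.ofFn fun i => t i.succ).take i).prod))⁻¹ := by
      funext i; group
    rw [e2]
    group

lemma prod_mul_eq (n : ℕ) (m t : Fin n → G) :
    (List.ofFn fun i => m i * t i).prod =
      (List.ofFn fun i : Fin n =>
        ((List.ofFn t).take i).prod * m i * (((List.ofFn t).take i).prod)⁻¹).prod *
        (List.ofFn t).prod := by
  have h := prod_mul_aux n m t 1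
  simpa using h


lemma coe_ofFn_prod {H : Subgroup G} {n : ℕ} (f : Fin n → ↥H) :
    ((List.ofFn f).prod : G) = (List.ofFn fun i => (f i : G)).prod := by
  rw [SubmonoidClass.coe_list_prod, List.map_ofFn]
  rfl

lemma pset_map {H : Subgroup G} (n : ℕ) (K : Fin n → Subgroup ↥H) :
    H.subtype '' (pset n K) = pset n (fun i => (K i).map H.subtype) := by
  ext x
  constructor
  · rintro ⟨y, ⟨f, hf, rfl⟩, rfl⟩
    exact ⟨fun i => (f i : G), fun i => mem_map_subtype_iff.2 (hf i), coe_ofFn_prod f⟩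
  · rintro ⟨f, hf, rfl⟩
    choose g hg hgf using fun i => hf i
    refine ⟨(List.ofFn g).prod, ⟨g, hg, rfl⟩, ?_⟩
    show ((List.ofFn g).prod : G) = _
    rw [coe_ofFn_prod]
    congr 1
    exact congrArg List.ofFn (funext fun i => hgf i)

lemma pset_translate (n : ℕ) (M : Fin n → Subgroup G) (t : Fin n → G) :
    {x : G | ∃ f : Fin n → G, (∀ i, ∃ m ∈ M i, f i = m * t i) ∧ x = (List.ofFn f).prod}
      = (· * (List.ofFn t).prod) ''
        (pset n fun i : Fin n =>
          (M i).map (MulAut.conj (((List.ofFn t).take i).prod)).toMonoidHom) := by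
  ext x
  constructor
  · rintro ⟨f, hf, rfl⟩
    choose m hm hfm using hf
    have hfe : f = fun i => m i * t i := funext hfm
    subst hfe
    refine ⟨(List.ofFn fun i : Fin n =>
        ((List.ofFn t).take (i : ℕ)).prod * m i * (((List.ofFn t).take (i : ℕ)).prod)⁻¹).prod,
      ⟨fun i : Fin n =>
          ((List.ofFn t).take (i : ℕ)).prod * m i * (((List.ofFn t).take (i : ℕ)).prod)⁻¹,
        fun i => ⟨m i, hm i, by simp [MulAut.conj_apply]⟩, rfl⟩, ?_⟩
    exact (prod_mul_eq n m t).symm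
  · rintro ⟨y, ⟨f', hf', rfl⟩, rfl⟩
    choose m hm hfm using hf'
    have hfe : f' = fun i : Fin n => ((List.ofFn t).take (i : ℕ)).prod * m i *
        (((List.ofFn t).take (i : ℕ)).prod)⁻¹ := by
      funext i
      rw [← hfm i]
      simp [MulAut.conj_apply]
    subst hfe
    exact ⟨fun i => m i * t i, fun i => ⟨m i, hm i, rfl⟩, (prod_mul_eq n m t).symm⟩


lemma fg_subgroupOf {H L : Subgroup G} (hle : L ≤ H) (hfg : L.FG) :
    (L.subgroupOf H).FG := by
  haveI : Group.FG ↥L := (Group.fg_iff_subgroup_fg L).2 hfg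
  haveI : Group.FG ↥(L.subgroupOf H) :=
    Group.fg_of_surjective (f := (subgroupOfEquivOfLe hle).symm.toMonoidHom)
      (subgroupOfEquivOfLe hle).symm.surjective
  exact (Group.fg_iff_subgroup_fg _).1 inferInstance

lemma fg_inf_of_finiteIndex {K N : Subgroup G} (hK : K.FG) (hN : N.FiniteIndex) :
    (K ⊓ N).FG := by
  haveI : Group.FG ↥K := (Group.fg_iff_subgroup_fg K).2 hK
  haveI : N.FiniteIndex := hN
  haveI : (N.subgroupOf K).FiniteIndex := Subgroup.instFiniteIndex_subgroupOf N K
  haveI : Group.FG ↥(N.subgroupOf K) := Subgroup.fg_of_index_ne_zero (N.subgroupOf K)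
  have h1 : (N.subgroupOf K).FG := (Group.fg_iff_subgroup_fg _).1 inferInstance
  have h2 := fgmap h1 K.subtype
  rw [subgroupOf_map_subtype, inf_comm] at h2
  exact h2

open Classical in
noncomputable def transv (N : Subgroup G) (K : Subgroup G) (c : G ⧸ N) : G :=
  if h : ∃ k, k ∈ K ∧ QuotientGroup.mk k = c then h.choose else 1

lemma transv_eq (N K : Subgroup G) {c : G ⧸ N}
    (h : ∃ k, k ∈ K ∧ QuotientGroup.mk k = c) : transv N K c = h.choose := by
  unfold transv
  rw [dif_pos h]

lemma transv_mem (N K : Subgroup G) (c : G ⧸ N) : transv N K c ∈ K := by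
  by_cases h : ∃ k, k ∈ K ∧ QuotientGroup.mk k = c
  · rw [transv_eq N K h]
    exact h.choose_spec.1
  · unfold transv
    rw [dif_neg h]
    exact one_mem K

lemma transv_decomp (N : Subgroup G) [hNn : N.Normal] (K : Subgroup G) {k : G} (hk : k ∈ K) :
    ∃ m ∈ K ⊓ N, k = m * transv N K (QuotientGroup.mk k) := by
  have h : ∃ k', k' ∈ K ∧ QuotientGroup.mk (s := N) k' = QuotientGroup.mk (s := N) k :=
    ⟨k, hk, rfl⟩
  have hts : transv N K (QuotientGroup.mk k) = h.choose := transv_eq N K h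
  obtain ⟨htK, htc⟩ := h.choose_spec
  have hmemN : (h.choose)⁻¹ * k ∈ N := by rw [← QuotientGroup.eq]; exact htc
  refine ⟨k * (h.choose)⁻¹, Subgroup.mem_inf.2 ⟨mul_mem hk (inv_mem htK), ?_⟩,
    by rw [hts]; group⟩
  have hconj := hNn.conj_mem _ hmemN k
  simpa [mul_assoc] using hconj

lemma isClosed_pset_of_le {H : Subgroup G} (hH : H.FiniteIndex) (hPS : ProductSeparable ↥H)
    (n : ℕ) (L : Fin n → Subgroup G) (hle : ∀ i, L i ≤ H) (hfg : ∀ i, (L i).FG) :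
    IsClosed[profiniteTopology G] (pset n L) := by
  have hfg' : ∀ i, ((L i).subgroupOf H).FG := fun i => fg_subgroupOf (hle i) (hfg i)
  have hclosed := hPS n (fun i => (L i).subgroupOf H) hfg'
  have himg : pset n L = H.subtype '' (pset n fun i => (L i).subgroupOf H) := by
    have hLe : (fun i => ((L i).subgroupOf H).map H.subtype) = L :=
      funext fun i => by rw [subgroupOf_map_subtype, inf_eq_left.2 (hle i)]
    rw [pset_map, hLe]
  rw [himg]
  exact isClosed_image_of_isClosed hH hclosed

lemma forward {H : Subgroup G} (hH : H.FiniteIndex) (hG : ProductSeparable G) :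
    ProductSeparable ↥H := by
  intro n K hfg
  have hfg' : ∀ i, ((K i).map H.subtype).FG := fun i => fgmap (hfg i) H.subtype
  have hclosed := hG n (fun i => (K i).map H.subtype) hfg'
  have heq : {x : ↥H | ∃ f : Fin n → ↥H, (∀ i, f i ∈ K i) ∧ x = (List.ofFn f).prod}
      = H.subtype ⁻¹' (pset n fun i => (K i).map H.subtype) := by
    rw [← pset_map, Set.preimage_image_eq _ (Subgroup.subtype_injective H)]
    rfl
  rw [heq, profiniteTopology_subgroup H hH]
  exact @IsClosed.preimage ↥H G ((profiniteTopology G).induced H.subtype)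
    (profiniteTopology G) H.subtype continuous_induced_dom _ hclosed

lemma reverse {H : Subgroup G} (hH : H.FiniteIndex) (hPS : ProductSeparable ↥H) :
    ProductSeparable G := by
  intro n K hfg
  letI := profiniteTopology G
  haveI : H.FiniteIndex := hH
  haveI hNn : H.normalCore.Normal := H.normalCore_normal
  haveI hNfi : H.normalCore.FiniteIndex := inferInstance
  set N := H.normalCore with hNdef
  show IsClosed (pset n K)
  have hdecomp : pset n K = ⋃ c : Fin n → G ⧸ N,
      {x : G | ∃ f : Fin n → G,
        (∀ i, ∃ m ∈ (K i ⊓ N : Subgroup G), f i = m * transv N (K i) (c i)) ∧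
        x = (List.ofFn f).prod} := by
    ext x
    simp only [Set.mem_iUnion]
    constructor
    · rintro ⟨f, hf, rfl⟩
      exact ⟨fun i => QuotientGroup.mk (f i), f,
        fun i => transv_decomp N (K i) (hf i), rfl⟩
    · rintro ⟨c, f, hf, rfl⟩
      refine ⟨f, fun i => ?_, rfl⟩
      obtain ⟨m, hm, hfm⟩ := hf i
      rw [hfm]
      exact mul_mem (Subgroup.mem_inf.1 hm).1 (transv_mem N (K i) (c i))
  rw [hdecomp]
  refine isClosed_iUnion_of_finite fun c => ?_
  rw [pset_translate n (fun i => K i ⊓ N) (fun i => transv N (K i) (c i))]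
  apply isClosed_translate
  apply isClosed_pset_of_le hH hPS
  · rintro i y ⟨m, hm, rfl⟩
    have hmN : m ∈ N := (Subgroup.mem_inf.1 hm).2
    have := hNn.conj_mem _ hmN
      ((List.ofFn fun j : Fin n => transv N (K j) (c j)).take (i : ℕ)).prod
    exact H.normalCore_le (by simpa [MulAut.conj_apply] using this)
  · intro i
    exact fgmap (fg_inf_of_finiteIndex (hfg i) hNfi) _

end PSaux

/-- A group `G` is product separable iff a finite-index subgroup `H` is product separable. -/
theorem productSeparable_iff_of_finiteIndex {G : Type*} [Group G]
    (H : Subgroup G) (hH : H.FiniteIndex) :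
    ProductSeparable G ↔ ProductSeparable H := by
  exact ⟨fun h => PSaux.forward hH h, fun h => PSaux.reverse hH h⟩
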